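/- arXiv:1906.03748 — 2 statements merged into one kernel-verified Lean document; each statement's English description precedes it below -/
import Mathlib

section
/- Let H be a graph and c, d positive integers such that χ(K_c^H) ≥ c + 1. Then χ(K_{cd}^H) ≥ χ_{c+1}(K(cd, c)), where χ_{c+1} denotes the (c+1)-st multichromatic number. -/
open SimpleGraph

/-- The categorical (tensor) product of two simple graphs. -/
def tensorProd {V W : Type*} (G : SimpleGraph V) (H : SimpleGraph W) :
    SimpleGraph (V × W) where
  Adj a b := G.Adj a.1 b.1 ∧ H.Adj a.2 b.2
  symm := ⟨fun a b h => ⟨h.1.symm, h.2.symm⟩⟩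
  loopless := ⟨fun a h => G.loopless.irrefl a.1 h.1⟩

/-- The exponential graph `K_c^H`: vertices are functions `V(H) → Fin c`,
two distinct functions `f, g` are adjacent iff `f u ≠ g v` for every edge `uv` of `H`. -/
def expGraph {V : Type*} (H : SimpleGraph V) (c : ℕ) : SimpleGraph (V → Fin c) where
  Adj f g := f ≠ g ∧ ∀ u v, H.Adj u v → f u ≠ g v
  symm := ⟨fun f g h => ⟨h.1.symm, fun u v huv => (h.2 v u huv.symm).symm⟩⟩
  loopless := ⟨fun f h => h.1 rfl⟩

/-- The Kneser graph `K(m, n)`: vertices are the `n`-element subsets of an `m`-element set,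
two distinct such subsets being adjacent iff they are disjoint. -/
def kneser (m n : ℕ) : SimpleGraph {A : Finset (Fin m) // A.card = n} where
  Adj A B := A ≠ B ∧ Disjoint A.1 B.1
  symm := ⟨fun A B h => ⟨h.1.symm, h.2.symm⟩⟩
  loopless := ⟨fun A h => h.1 rfl⟩

/-- The `n`-th multichromatic number of a graph: the least `m` such that the graph
admits a homomorphism to the Kneser graph `K(m, n)`. -/
noncomputable def multichromatic {V : Type*} (H : SimpleGraph V) (n : ℕ) : ℕ :=
  sInf {m : ℕ | Nonempty (H →g kneser m n)}

/-- The Poljak–Rödl function `f(n) = min {χ(G × H) : χ(G) ≥ n, χ(H) ≥ n}`. -/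
noncomputable def poljakRodl (n : ℕ) : ℕ :=
  sInf {k : ℕ | ∃ (p q : ℕ) (G : SimpleGraph (Fin p)) (H : SimpleGraph (Fin q)),
    (n : ℕ∞) ≤ G.chromaticNumber ∧ (n : ℕ∞) ≤ H.chromaticNumber ∧
    (tensorProd G H).chromaticNumber = (k : ℕ∞)}

/-- The lexicographic product `G[H]`. -/
def lexProd {V W : Type*} (G : SimpleGraph V) (H : SimpleGraph W) :
    SimpleGraph (V × W) where
  Adj a b := G.Adj a.1 b.1 ∨ (a.1 = b.1 ∧ H.Adj a.2 b.2)
  symm := ⟨fun a b h => by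
    rcases h with h | ⟨h1, h2⟩
    · exact Or.inl h.symm
    · exact Or.inr ⟨h1.symm, h2.symm⟩⟩
  loopless := ⟨fun a h => by
    rcases h with h | ⟨_, h2⟩
    · exact G.loopless.irrefl a.1 h
    · exact H.loopless.irrefl a.2 h2⟩

/-- If `χ(K_c^H) ≥ c + 1`, then `χ(K_{cd}^H) ≥ χ_{c+1}(K(cd, c))`. -/
theorem expGraph_chromaticNumber_ge_multichromatic {V : Type*} [Fintype V]
    (H : SimpleGraph V) (c d : ℕ) (hc : 0 < c) (hd : 0 < d)
    (hchi : ((c + 1 : ℕ) : ℕ∞) ≤ (expGraph H c).chromaticNumber) :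
    ((multichromatic (kneser (c * d) c) (c + 1) : ℕ) : ℕ∞) ≤
      (expGraph H (c * d)).chromaticNumber := by
  classical
  -- V is nonempty, otherwise `expGraph H c` is 1-colorable, contradicting `hchi`.
  have hVne : Nonempty V := by
    rcases isEmpty_or_nonempty V with hV | hV
    · exfalso
      have hcol : (expGraph H c).Colorable 1 :=
        ⟨Coloring.mk (fun _ => 0) (fun {f g} h =>
          absurd (funext fun v => (hV.false v).elim) h.1)⟩
      have h1 := hcol.chromaticNumber_le
      have h2 : ((c + 1 : ℕ) : ℕ∞) ≤ ((1 : ℕ) : ℕ∞) := le_trans hchi h1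
      have h3 : c + 1 ≤ 1 := Nat.cast_le.mp h2
      omega
    · exact hV
  rw [SimpleGraph.chromaticNumber]
  refine le_iInf₂ fun n hn => ?_
  obtain ⟨φ⟩ := hn
  -- colors used on functions whose range lies in `A`
  set S : Finset (Fin (c * d)) → Finset (Fin n) := fun A =>
    (Finset.univ.filter (fun f : V → Fin (c * d) => ∀ v, f v ∈ A)).image φ with hS
  -- each `S A` with `A.card = c` has at least `c + 1` colors
  have hcard : ∀ A : Finset (Fin (c * d)), A.card = c → c + 1 ≤ (S A).card := by
    intro A hA
    set e := A.orderIsoOfFin hA with he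
    set F : (V → Fin c) → (V → Fin (c * d)) := fun f v => (e (f v) : Fin (c * d)) with hF
    have hFinj : Function.Injective F := by
      intro f g h
      funext v
      have := congrFun h v
      exact e.injective (Subtype.ext this)
    have hFmem : ∀ f, F f ∈ Finset.univ.filter
        (fun f : V → Fin (c * d) => ∀ v, f v ∈ A) := by
      intro f
      simp only [Finset.mem_filter, Finset.mem_univ, true_and]
      intro v
      exact (e (f v)).2
    have col : (expGraph H c).Coloring ↥(S A) := by
      refine Coloring.mk (fun f => ⟨φ (F f), ?_⟩) ?_
      · exact Finset.mem_image.mpr ⟨F f, hFmem f, rfl⟩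
      · intro f g hfg
        have hadj : (expGraph H (c * d)).Adj (F f) (F g) := by
          refine ⟨fun h => hfg.1 (hFinj h), fun u v huv => ?_⟩
          intro h
          exact hfg.2 u v huv (e.injective (Subtype.ext h))
        intro h
        exact φ.valid hadj (congrArg Subtype.val h)
    have hcol : (expGraph H c).Colorable (S A).card := by
      have := col.colorable
      rwa [Fintype.card_coe] at this
    have := le_trans hchi hcol.chromaticNumber_le
    exact_mod_cast this
  -- disjoint subsets get disjoint color sets
  have hdisj : ∀ A B : Finset (Fin (c * d)), Disjoint A B → Disjoint (S A) (S B) := by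
    intro A B hAB
    rw [Finset.disjoint_left]
    intro x hxA hxB
    simp only [hS, Finset.mem_image, Finset.mem_filter, Finset.mem_univ, true_and] at hxA hxB
    obtain ⟨f, hf, hfx⟩ := hxA
    obtain ⟨g, hg, hgx⟩ := hxB
    obtain ⟨v0⟩ := hVne
    have hne : f ≠ g := by
      intro h
      exact Finset.disjoint_left.mp hAB (hf v0) (h ▸ hg v0)
    have hadj : (expGraph H (c * d)).Adj f g := by
      refine ⟨hne, fun u v huv h => ?_⟩
      exact Finset.disjoint_left.mp hAB (hf u) (h ▸ hg v)
    exact φ.valid hadj (hfx.trans hgx.symm)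
  -- choose a (c+1)-subset of each S A
  have hT : ∀ A : {A : Finset (Fin (c * d)) // A.card = c},
      ∃ t ⊆ S A.1, t.card = c + 1 := fun A =>
    Finset.exists_subset_card_eq (hcard A.1 A.2)
  choose T hTsub hTcard using hT
  have hom : kneser (c * d) c →g kneser n (c + 1) := by
    refine ⟨fun A => ⟨T A, hTcard A⟩, ?_⟩
    rintro A B ⟨hABne, hABdisj⟩
    have hd2 : Disjoint (T A) (T B) :=
      ((hdisj A.1 B.1 hABdisj).mono (hTsub A) (hTsub B))
    refine ⟨?_, hd2⟩
    intro h
    have h' : T A = T B := congrArg Subtype.val h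
    have hne : (T A).Nonempty := Finset.card_pos.mp (by rw [hTcard A]; omega)
    rw [h'] at hne
    rw [h'] at hd2
    exact hne.ne_empty (disjoint_self.mp hd2)
  have hmem : n ∈ {m : ℕ | Nonempty (kneser (c * d) c →g kneser m (c + 1))} := ⟨hom⟩
  have := Nat.sInf_le hmem
  exact_mod_cast this
end

section
/- Suppose that for every positive integer d there exist a positive integer c ≥ 2 and a graph H with χ(K_c^H) ≥ c + 1 and χ(H) ≥ 2cd such that, for all but finitely many n, the Poljak–Rödl function satisfies f(n + d) ≤ n. Then in particular, if c and H satisfy χ(K_c^H) ≥ c + 1 and χ(H) ≥ cd + d, then χ(K_{cd}^H) ≥ d(c + 1) and f(cd + d) ≤ cd. -/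
open SimpleGraph

section Aux

variable {V : Type*}

/-- Transfer colorability along a graph homomorphism. -/
lemma colorable_of_hom {W : Type*} {A : SimpleGraph V} {B : SimpleGraph W}
    (f : A →g B) {n : ℕ} (h : B.Colorable n) : A.Colorable n := by
  obtain ⟨C⟩ := h
  exact ⟨C.comp f⟩

/-- The "first block" homomorphism K_a^H → K_{a+b}^H. -/
def expHomA (H : SimpleGraph V) (a b : ℕ) :
    expGraph H a →g expGraph H (a + b) where
  toFun g := fun v => Fin.castAdd b (g v)
  map_rel' := by
    intro g g' h
    refine ⟨fun hEq => h.1 (funext fun v => ?_), fun u v huv hEq => h.2 u v huv ?_⟩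
    · have := congrFun hEq v
      exact Fin.castAdd_injective _ _ this
    · exact Fin.castAdd_injective _ _ hEq

/-- The "second block" homomorphism K_b^H → K_{a+b}^H. -/
def expHomB (H : SimpleGraph V) (a b : ℕ) :
    expGraph H b →g expGraph H (a + b) where
  toFun g := fun v => Fin.natAdd a (g v)
  map_rel' := by
    intro g g' h
    refine ⟨fun hEq => h.1 (funext fun v => ?_), fun u v huv hEq => h.2 u v huv ?_⟩
    · have := congrFun hEq v
      exact (Fin.strictMono_natAdd a).injective this
    · exact (Fin.strictMono_natAdd a).injective hEq

lemma expHomA_adj_expHomB [Nonempty V] (H : SimpleGraph V) (a b : ℕ)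
    (g : V → Fin a) (h : V → Fin b) :
    (expGraph H (a + b)).Adj (expHomA H a b g) (expHomB H a b h) := by
  have key : ∀ (x : Fin a) (y : Fin b), Fin.castAdd b x ≠ Fin.natAdd a y := by
    intro x y hEq
    have := congrArg Fin.val hEq
    simp only [Fin.coe_castAdd, Fin.coe_natAdd] at this
    omega
  refine ⟨fun hEq => ?_, fun u v _ => key (g u) (h v)⟩
  have := congrFun hEq (Classical.arbitrary V)
  exact key _ _ this

/-- Superadditivity of the chromatic number of exponential graphs:
`K_{a+b}^H` contains the join of `K_a^H` and `K_b^H`. -/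
lemma exp_superadd [Fintype V] [Nonempty V] (H : SimpleGraph V) (a b k : ℕ)
    (hcol : (expGraph H (a + b)).Colorable k) :
    ∃ s t : ℕ, (expGraph H a).Colorable s ∧ (expGraph H b).Colorable t ∧ s + t ≤ k := by
  classical
  obtain ⟨C⟩ := hcol
  set fA : (V → Fin a) → Fin k := fun g => C (expHomA H a b g) with hfA
  set fB : (V → Fin b) → Fin k := fun g => C (expHomB H a b g) with hfB
  set S : Finset (Fin k) := Finset.image fA Finset.univ with hS
  set T : Finset (Fin k) := Finset.image fB Finset.univ with hT
  have hdisj : Disjoint S T := by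
    rw [Finset.disjoint_left]
    rintro x hx hx'
    simp only [hS, hT, Finset.mem_image, Finset.mem_univ, true_and] at hx hx'
    obtain ⟨g, hg⟩ := hx
    obtain ⟨h, hh⟩ := hx'
    exact C.valid (expHomA_adj_expHomB H a b g h) (hg.trans hh.symm)
  have hcardA : (expGraph H a).Colorable S.card := by
    have CA : (expGraph H a).Coloring {x // x ∈ S} :=
      Coloring.mk (fun g => ⟨fA g, by simp [hS]⟩)
        (fun {g g'} hadj hEq => C.valid ((expHomA H a b).map_rel hadj)
          (by simpa using congrArg Subtype.val hEq))
    simpa using CA.colorable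
  have hcardB : (expGraph H b).Colorable T.card := by
    have CB : (expGraph H b).Coloring {x // x ∈ T} :=
      Coloring.mk (fun g => ⟨fB g, by simp [hT]⟩)
        (fun {g g'} hadj hEq => C.valid ((expHomB H a b).map_rel hadj)
          (by simpa using congrArg Subtype.val hEq))
    simpa using CB.colorable
  refine ⟨S.card, T.card, hcardA, hcardB, ?_⟩
  have := Finset.card_le_univ (S ∪ T)
  rw [Finset.card_union_of_disjoint hdisj] at this
  simpa using this

lemma exp_lower_bound [Fintype V] [Nonempty V] (H : SimpleGraph V) (c : ℕ)
    (hc : ∀ s : ℕ, (expGraph H c).Colorable s → c + 1 ≤ s) :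
    ∀ d k : ℕ, (expGraph H (c * d)).Colorable k → d * (c + 1) ≤ k := by
  intro d
  induction d with
  | zero => intro k _; simp
  | succ d ih =>
    intro k hcol
    rw [show c * (d + 1) = c * d + c by ring] at hcol
    obtain ⟨s, t, hA, hB, hst⟩ := exp_superadd H (c * d) c k hcol
    have h1 := ih s hA
    have h2 := hc t hB
    nlinarith

end Aux

/-- Suppose for every `d ≥ 1` there are `c ≥ 2` and `H` with `χ(K_c^H) ≥ c + 1`,
`χ(H) ≥ 2cd`, such that for all but finitely many `n`, `f(n + d) ≤ n`. Then in particular,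
if `c` and `H` satisfy `χ(K_c^H) ≥ c + 1` and `χ(H) ≥ cd + d`, then
`χ(K_{cd}^H) ≥ d(c + 1)` and `f(cd + d) ≤ cd`. -/
theorem poljakRodl_of_expGraph_hypothesis
    (hyp : ∀ d : ℕ, 0 < d → ∃ c : ℕ, 2 ≤ c ∧ ∃ (p : ℕ) (H : SimpleGraph (Fin p)),
      ((c + 1 : ℕ) : ℕ∞) ≤ (expGraph H c).chromaticNumber ∧
      ((2 * c * d : ℕ) : ℕ∞) ≤ H.chromaticNumber ∧
      ∀ᶠ n : ℕ in Filter.atTop, poljakRodl (n + d) ≤ n) :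
    ∀ (d c : ℕ), 0 < d → 2 ≤ c → ∀ (V : Type) [Fintype V], ∀ H : SimpleGraph V,
      ((c + 1 : ℕ) : ℕ∞) ≤ (expGraph H c).chromaticNumber →
      ((c * d + d : ℕ) : ℕ∞) ≤ H.chromaticNumber →
      ((d * (c + 1) : ℕ) : ℕ∞) ≤ (expGraph H (c * d)).chromaticNumber ∧
      poljakRodl (c * d + d) ≤ c * d := by
  intro d c hd hc V _ H hexp hH
  classical
  -- V is nonempty
  have hne : Nonempty V := by
    by_contra hne
    haveI : IsEmpty V := not_nonempty_iff.mp hne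
    haveI : Subsingleton (V → Fin c) := ⟨fun f g => funext fun v => isEmptyElim v⟩
    have h1 : (expGraph H c).chromaticNumber ≤ 1 :=
      chromaticNumber_le_one_of_subsingleton _
    have := hexp.trans h1
    rw [show (1 : ℕ∞) = ((1 : ℕ) : ℕ∞) by simp, Nat.cast_le] at this
    omega
  haveI := hne
  -- convert the hypothesis on K_c^H to a statement about colorings
  have hc' : ∀ s : ℕ, (expGraph H c).Colorable s → c + 1 ≤ s := by
    intro s hs
    have := hexp.trans hs.chromaticNumber_le
    exact_mod_cast this
  have key := exp_lower_bound H c hc'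
  -- part 1
  have part1 : ((d * (c + 1) : ℕ) : ℕ∞) ≤ (expGraph H (c * d)).chromaticNumber := by
    rw [chromaticNumber]
    refine le_iInf₂ fun n hn => ?_
    exact_mod_cast key d n hn
  refine ⟨part1, ?_⟩
  -- part 2
  set p := Fintype.card V with hp
  set e1 : V ≃ Fin p := Fintype.equivFin V with he1
  set G' : SimpleGraph (Fin p) := H.comap e1.symm with hG'
  set W := (V → Fin (c * d)) with hW
  set q := Fintype.card W with hq
  set e2 : W ≃ Fin q := Fintype.equivFin W with he2
  set H' : SimpleGraph (Fin q) := (expGraph H (c * d)).comap e2.symm with hH'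
  -- chromatic number of G' is at least that of H
  have hG'chr : H.chromaticNumber ≤ G'.chromaticNumber := by
    apply chromaticNumber_le_of_forall_imp
    intro n hn
    exact colorable_of_hom ⟨fun v => e1 v, fun {u v} h => by simp [hG', SimpleGraph.comap, h]⟩ hn
  have hH'chr : (expGraph H (c * d)).chromaticNumber ≤ H'.chromaticNumber := by
    apply chromaticNumber_le_of_forall_imp
    intro n hn
    exact colorable_of_hom ⟨fun w => e2 w, fun {u v} h => by simp [hH', SimpleGraph.comap, h]⟩ hn
  -- the tensor product is (c*d)-colorable by evaluation
  have heval : (tensorProd G' H').Colorable (c * d) := by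
    refine ⟨Coloring.mk (fun x => (e2.symm x.2) (e1.symm x.1)) ?_⟩
    rintro ⟨i, j⟩ ⟨i', j'⟩ ⟨h1, h2⟩
    exact h2.2 _ _ h1
  have hchle : (tensorProd G' H').chromaticNumber ≤ ((c * d : ℕ) : ℕ∞) :=
    heval.chromaticNumber_le
  obtain ⟨kk, hkk, hkkle⟩ := WithTop.le_coe_iff.mp hchle
  have hmem : kk ∈ {k : ℕ | ∃ (p' q' : ℕ) (G : SimpleGraph (Fin p')) (Hh : SimpleGraph (Fin q')),
      ((c * d + d : ℕ) : ℕ∞) ≤ G.chromaticNumber ∧ ((c * d + d : ℕ) : ℕ∞) ≤ Hh.chromaticNumber ∧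
      (tensorProd G Hh).chromaticNumber = (kk : ℕ∞)} := by
    refine ⟨p, q, G', H', hH.trans hG'chr, ?_, hkk⟩
    refine le_trans ?_ (part1.trans hH'chr)
    norm_cast
    ring_nf
    omega
  calc poljakRodl (c * d + d) ≤ kk := Nat.sInf_le hmem
    _ ≤ c * d := hkkle
end
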